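/- For the (α,0) case with 0 < α < 1, the decrement matrix q(n:m) of the regenerative composition structure satisfies q(n:m) = h(m) for m < n and q(n:n) = (1−α)_{n−1}/(n−1)!, where h(m) = α(1−α)_{m−1}/m!; in particular ∑_{m=1}^{n−1} h(m) + (1−α)_{n−1}/(n−1)! = 1 for every n ≥ 1. -/

import Mathlib

/-- Rising factorial `(z)_k = z (z+1) ⋯ (z+k-1)`. -/
noncomputable def rpoch (z : ℝ) (k : ℕ) : ℝ := ∏ i ∈ Finset.range k, (z + i)

open Finset

lemma rpoch_zero (z : ℝ) : rpoch z 0 = 1 := by simp [rpoch]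

lemma rpoch_succ (z : ℝ) (k : ℕ) : rpoch z (k + 1) = rpoch z k * (z + k) :=
  Finset.prod_range_succ _ _

lemma rpoch_pos {z : ℝ} (hz : 0 < z) (k : ℕ) : 0 < rpoch z k := by
  apply Finset.prod_pos
  intro i _
  positivity

noncomputable def Gfun (α : ℝ) (c a : ℕ) : ℝ := (a.factorial : ℝ) / rpoch (1 - α) (a + c)

lemma fwdDiff_Gfun (α : ℝ) (h1 : α < 1) (c : ℕ) :
    fwdDiff 1 (Gfun α c) = fun a => (α - c) * Gfun α (c + 1) a := by
  funext a
  have hz : (0:ℝ) < 1 - α := by linarith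
  have hR : rpoch (1 - α) (a + c) ≠ 0 := (rpoch_pos hz _).ne'
  have hR' : rpoch (1 - α) (a + c + 1) ≠ 0 := (rpoch_pos hz _).ne'
  have h1 : rpoch (1 - α) (a + 1 + c) = rpoch (1 - α) (a + c) * (1 - α + (a + c)) := by
    rw [show a + 1 + c = (a + c) + 1 by ring, rpoch_succ]; push_cast; ring_nf
  have h2 : a + (c + 1) = a + c + 1 := by ring
  simp only [fwdDiff, Gfun, h1, h2, rpoch_succ]
  have hD : (1 - α + ((a:ℝ) + c)) ≠ 0 := by positivity
  rw [Nat.factorial_succ]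
  push_cast
  field_simp
  ring

lemma fwdDiff_iter_Gfun (α : ℝ) (h1 : α < 1) (m : ℕ) : ∀ c a : ℕ,
    (fwdDiff 1)^[m] (Gfun α c) a = (∏ i ∈ Finset.range m, (α - c - i)) * Gfun α (c + m) a := by
  induction m with
  | zero => intro c a; simp
  | succ m ih =>
    intro c a
    rw [Function.iterate_succ_apply, fwdDiff_Gfun α h1 c]
    have hfun : (fun a => (α - c) * Gfun α (c + 1) a) = (α - c) • Gfun α (c + 1) := by
      funext x; simp [smul_eq_mul]
    rw [hfun, fwdDiff_iter_const_smul, Pi.smul_apply, smul_eq_mul, ih (c + 1) a,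
      show c + 1 + m = c + (m + 1) from by ring]
    have hp : (∏ i ∈ Finset.range (m + 1), (α - (c:ℝ) - (i:ℕ)))
        = (α - c) * ∏ i ∈ Finset.range m, (α - ((c + 1 : ℕ):ℝ) - (i:ℕ)) := by
      rw [Finset.prod_range_succ']
      rw [Finset.prod_congr rfl (fun i _ =>
        show (α - (c:ℝ) - ((i + 1 : ℕ):ℝ)) = α - ((c + 1 : ℕ):ℝ) - (i:ℕ) from by
          push_cast; ring)]
      push_cast; ring
    rw [hp]; ring

lemma sum_signed (α : ℝ) (h1 : α < 1) (m : ℕ) (hm : 1 ≤ m) (a : ℕ) :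
    ∑ j ∈ Finset.range (m + 1), (-1 : ℝ) ^ (j + 1) * (m.choose j : ℝ) * Gfun α 0 (a + j)
      = α * rpoch (1 - α) (m - 1) * Gfun α m a := by
  have key := fwdDiff_iter_eq_sum_shift (1 : ℕ) (Gfun α 0) m a
  rw [fwdDiff_iter_Gfun α h1 m 0 a] at key
  obtain ⟨m', rfl⟩ : ∃ m', m = m' + 1 := ⟨m - 1, (Nat.succ_pred_eq_of_pos hm).symm⟩
  have hprod : (∏ i ∈ Finset.range (m' + 1), (α - ((0:ℕ):ℝ) - (i:ℕ)))
      = α * ((-1:ℝ)^m' * rpoch (1 - α) m') := by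
    rw [Finset.prod_range_succ']
    rw [Finset.prod_congr rfl (fun i _ =>
      show (α - ((0:ℕ):ℝ) - ((i + 1 : ℕ):ℝ)) = (-1) * (1 - α + (i:ℕ)) from by
        push_cast; ring)]
    rw [Finset.prod_mul_distrib, Finset.prod_const, Finset.card_range]
    rw [rpoch]
    push_cast; ring
  rw [hprod] at key
  have hsimp : ∀ j ∈ Finset.range (m' + 1 + 1),
      ((-1 : ℤ) ^ (m' + 1 - j) * ((m' + 1).choose j : ℤ)) • Gfun α 0 (a + j • 1)
        = (-1:ℝ)^m' * ((-1 : ℝ) ^ (j + 1) * ((m' + 1).choose j : ℝ) * Gfun α 0 (a + j)) := by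
    intro j hj
    rw [Finset.mem_range] at hj
    have hj' : j ≤ m' + 1 := Nat.lt_succ_iff.mp hj
    rw [zsmul_eq_mul, smul_eq_mul, mul_one]
    push_cast
    have hsq : (-1:ℝ)^j * (-1:ℝ)^j = 1 := by
      rw [← pow_add, ← two_mul, pow_mul]; norm_num
    have h2 : (-1:ℝ) ^ (m' + 1 - j) = (-1:ℝ)^(m'+1) * (-1:ℝ)^j := by
      calc (-1:ℝ) ^ (m' + 1 - j) = (-1:ℝ) ^ (m' + 1 - j) * ((-1:ℝ)^j * (-1:ℝ)^j) := by
            rw [hsq, mul_one]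
        _ = ((-1:ℝ) ^ (m' + 1 - j) * (-1:ℝ)^j) * (-1:ℝ)^j := by ring
        _ = (-1:ℝ)^(m'+1) * (-1:ℝ)^j := by
            rw [← pow_add, Nat.sub_add_cancel hj']
    rw [h2]
    ring
  rw [Finset.sum_congr rfl hsimp, ← Finset.mul_sum] at key
  have hunit : ((-1:ℝ)^m') * ((-1:ℝ)^m') = 1 := by
    rw [← pow_add, ← two_mul, pow_mul]; norm_num
  have hS : ∑ j ∈ Finset.range (m' + 1 + 1),
      (-1 : ℝ) ^ (j + 1) * ((m' + 1).choose j : ℝ) * Gfun α 0 (a + j)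
      = (-1:ℝ)^m' * (α * ((-1:ℝ)^m' * rpoch (1 - α) m') * Gfun α (0 + (m' + 1)) a) := by
    rw [key, ← mul_assoc, hunit, one_mul]
  rw [hS, Nat.add_sub_cancel, Nat.zero_add]
  calc (-1:ℝ)^m' * (α * ((-1:ℝ)^m' * rpoch (1 - α) m') * Gfun α (m' + 1) a)
      = ((-1:ℝ)^m' * (-1:ℝ)^m') * (α * rpoch (1 - α) m' * Gfun α (m' + 1) a) := by ring
    _ = α * rpoch (1 - α) m' * Gfun α (m' + 1) a := by rw [hunit, one_mul]

/-- Laplace exponent of the `(α,0)` regenerative composition structure: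
`Φ(n) = n!/(1−α)_n` for `n ≥ 1`, `Φ(0) = 0`. -/
noncomputable def PhiAlpha (α : ℝ) (n : ℕ) : ℝ :=
  if n = 0 then 0 else (n.factorial : ℝ) / rpoch (1 - α) n

/-- Binomial moments `Φ(n:m) = C(n,m) ∑_{j=0}^m (−1)^{j+1} C(m,j) Φ(n−m+j)`. -/
noncomputable def PhiAlphaNM (α : ℝ) (n m : ℕ) : ℝ :=
  (n.choose m : ℝ) * ∑ j ∈ Finset.range (m + 1),
    (-1 : ℝ) ^ (j + 1) * (m.choose j : ℝ) * PhiAlpha α (n - m + j)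

lemma PhiAlpha_eq_Gfun (α : ℝ) (k : ℕ) (hk : k ≠ 0) : PhiAlpha α k = Gfun α 0 k := by
  simp [PhiAlpha, Gfun, hk]

lemma telescope (α : ℝ) (h0 : 0 < α) (h1 : α < 1) (k : ℕ) :
    (∑ m ∈ Finset.Icc 1 k, α * rpoch (1 - α) (m - 1) / (m.factorial : ℝ))
      + rpoch (1 - α) k / (k.factorial : ℝ) = 1 := by
  induction k with
  | zero => simp [Finset.Icc_eq_empty (by omega : ¬ (1:ℕ) ≤ 0), rpoch_zero]
  | succ k ih =>
    rw [Finset.sum_Icc_succ_top (by omega : 1 ≤ k + 1)]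
    have hk : ((k.factorial : ℝ)) ≠ 0 := Nat.cast_ne_zero.mpr (Nat.factorial_ne_zero k)
    simp only [Nat.add_sub_cancel]
    rw [rpoch_succ, Nat.factorial_succ]
    push_cast
    have hD : ((k:ℝ) + 1) ≠ 0 := by positivity
    field_simp at ih ⊢
    linear_combination ((k:ℝ) + 1) * ih

/-- For the `(α,0)` case with `0 < α < 1`, the decrement matrix
`q(n:m) = Φ(n:m)/Φ(n)` satisfies `q(n:m) = h(m) = α(1−α)_{m−1}/m!` for `m < n`
and `q(n:n) = (1−α)_{n−1}/(n−1)!`; in particular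
`∑_{m=1}^{n−1} h(m) + (1−α)_{n−1}/(n−1)! = 1`. -/
theorem alpha_zero_decrement (α : ℝ) (h0 : 0 < α) (h1 : α < 1) (n : ℕ) (hn : 1 ≤ n) :
    (∀ m : ℕ, 1 ≤ m → m < n →
      PhiAlphaNM α n m / PhiAlpha α n = α * rpoch (1 - α) (m - 1) / (m.factorial : ℝ)) ∧
    PhiAlphaNM α n n / PhiAlpha α n = rpoch (1 - α) (n - 1) / ((n - 1).factorial : ℝ) ∧
    (∑ m ∈ Finset.Icc 1 (n - 1), α * rpoch (1 - α) (m - 1) / (m.factorial : ℝ)) +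
      rpoch (1 - α) (n - 1) / ((n - 1).factorial : ℝ) = 1 := by
  have hz : (0:ℝ) < 1 - α := by linarith
  refine ⟨?_, ?_, telescope α h0 h1 (n - 1)⟩
  · intro m hm hmn
    have hsum : ∑ j ∈ Finset.range (m + 1),
        (-1 : ℝ) ^ (j + 1) * (m.choose j : ℝ) * PhiAlpha α (n - m + j)
        = α * rpoch (1 - α) (m - 1) * Gfun α m (n - m) := by
      rw [Finset.sum_congr rfl (fun j _ => by
        rw [PhiAlpha_eq_Gfun α (n - m + j) (by omega)])]
      exact sum_signed α h1 m hm (n - m)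
    have hnm : n - m + m = n := Nat.sub_add_cancel hmn.le
    have hG : Gfun α m (n - m) = ((n - m).factorial : ℝ) / rpoch (1 - α) n := by
      rw [Gfun, hnm]
    have hfac : ((n.choose m : ℕ) : ℝ) * (m.factorial : ℝ) * ((n - m).factorial : ℝ)
        = (n.factorial : ℝ) := by
      exact_mod_cast congrArg (Nat.cast : ℕ → ℝ)
        (Nat.choose_mul_factorial_mul_factorial hmn.le)
    rw [PhiAlphaNM, hsum, hG, PhiAlpha, if_neg (by omega : n ≠ 0)]
    have hR : rpoch (1 - α) n ≠ 0 := (rpoch_pos hz _).ne'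
    have hmf : (m.factorial : ℝ) ≠ 0 := Nat.cast_ne_zero.mpr (Nat.factorial_ne_zero m)
    have hnf : (n.factorial : ℝ) ≠ 0 := Nat.cast_ne_zero.mpr (Nat.factorial_ne_zero n)
    field_simp
    linear_combination (rpoch (1 - α) (m - 1)) * hfac
  · obtain ⟨k, rfl⟩ : ∃ k, n = k + 1 := ⟨n - 1, by omega⟩
    have hR : rpoch (1 - α) (k + 1) ≠ 0 := (rpoch_pos hz _).ne'
    have hP : rpoch (1 - α) k ≠ 0 := (rpoch_pos hz _).ne'
    have hkf : ((k.factorial : ℕ) : ℝ) ≠ 0 := Nat.cast_ne_zero.mpr (Nat.factorial_ne_zero k)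
    have hsplit : ∑ j ∈ Finset.range (k + 1 + 1),
        (-1 : ℝ) ^ (j + 1) * ((k + 1).choose j : ℝ) * PhiAlpha α (k + 1 - (k + 1) + j)
        = α * rpoch (1 - α) k / rpoch (1 - α) (k + 1) + 1 := by
      have hG0 : ∑ j ∈ Finset.range (k + 1 + 1),
          (-1 : ℝ) ^ (j + 1) * ((k + 1).choose j : ℝ) * Gfun α 0 (0 + j)
          = α * rpoch (1 - α) k * Gfun α (k + 1) 0 :=
        sum_signed α h1 (k + 1) (by omega) 0
      rw [Finset.sum_range_succ'] at hG0 ⊢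
      have htail : ∀ j ∈ Finset.range (k + 1),
          (-1 : ℝ) ^ (j + 1 + 1) * ((k + 1).choose (j + 1) : ℝ)
              * PhiAlpha α (k + 1 - (k + 1) + (j + 1))
          = (-1 : ℝ) ^ (j + 1 + 1) * ((k + 1).choose (j + 1) : ℝ) * Gfun α 0 (0 + (j + 1)) := by
        intro j _
        rw [Nat.sub_self, PhiAlpha_eq_Gfun α _ (by omega)]
      rw [Finset.sum_congr rfl htail]
      have hhead : (-1 : ℝ) ^ (0 + 1) * ((k + 1).choose 0 : ℝ)
          * PhiAlpha α (k + 1 - (k + 1) + 0) = 0 := by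
        simp [PhiAlpha]
      have hheadG : (-1 : ℝ) ^ (0 + 1) * ((k + 1).choose 0 : ℝ) * Gfun α 0 (0 + 0) = -1 := by
        simp [Gfun, rpoch_zero]
      rw [hheadG] at hG0
      rw [hhead]
      have : (∑ j ∈ Finset.range (k + 1),
          (-1 : ℝ) ^ (j + 1 + 1) * ((k + 1).choose (j + 1) : ℝ) * Gfun α 0 (0 + (j + 1)))
          = α * rpoch (1 - α) k * Gfun α (k + 1) 0 + 1 := by linarith [hG0]
      rw [this]
      have : Gfun α (k + 1) 0 = 1 / rpoch (1 - α) (k + 1) := by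
        simp [Gfun]
      rw [this]
      ring
    rw [PhiAlphaNM, Nat.choose_self, hsplit, PhiAlpha, if_neg (by omega : k + 1 ≠ 0)]
    have hRn : rpoch (1 - α) (k + 1) = rpoch (1 - α) k * (1 - α + k) := rpoch_succ _ _
    have hfac : ((k + 1).factorial : ℝ) = ((k:ℝ) + 1) * (k.factorial : ℝ) := by
      rw [Nat.factorial_succ]; push_cast; ring
    simp only [Nat.add_sub_cancel, Nat.cast_one, one_mul]
    rw [hRn, hfac]
    have hD : (1 - α + (k:ℝ)) ≠ 0 := by positivity
    field_simp
    ring
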